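/- Smoothed value function error bound: for every λ > 0 and every t ∈ ℝ, −1/(4λ) ≤ F(t) − F_λ(t) ≤ 0. -/

import Mathlib

open scoped BigOperators

/-- `f_k(Ω) = −(1/α)·|∑_n h_n e^{iΩ_n}|²`. -/
noncomputable def fObj {N : ℕ} (α : ℝ) (h : Fin N → ℂ) (Ω : Fin N → ℝ) : ℝ :=
  -(1 / α) * ‖∑ n, h n * Complex.exp (Complex.I * (Ω n : ℂ))‖ ^ 2

/-- `g_q(Ω) = |∑_n c_n e^{iΩ_n}|²`. -/
noncomputable def gObj {N : ℕ} (c : Fin N → ℂ) (Ω : Fin N → ℝ) : ℝ :=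
  ‖∑ n, c n * Complex.exp (Complex.I * (Ω n : ℂ))‖ ^ 2

/-- The unit simplex in Euclidean space `ℝ^m`. -/
def unitSimplex (m : ℕ) : Set (EuclideanSpace ℝ (Fin m)) :=
  {x | (∀ i, 0 ≤ x i) ∧ ∑ i, x i = 1}

/-- The compensated-convexity upper transform of the maximum function:
`C_λ(y) = λ‖y‖² − dist(2λy, Δ)²/(4λ) + 1/(4λ)`. -/
noncomputable def Cupper {m : ℕ} (lam : ℝ) (y : EuclideanSpace ℝ (Fin m)) : ℝ :=
  lam * ‖y‖ ^ 2 - (Metric.infDist ((2 * lam) • y) (unitSimplex m)) ^ 2 / (4 * lam) + 1 / (4 * lam)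

/-- `h(Ω,t) = (f_1(Ω)−t,…,f_K(Ω)−t, g_1(Ω)−σ_1,…,g_Q(Ω)−σ_Q) ∈ ℝ^{K+Q}`. -/
noncomputable def hVec {N K Q : ℕ} (h : Fin K → Fin N → ℂ) (α : Fin K → ℝ)
    (c : Fin Q → Fin N → ℂ) (σ : Fin Q → ℝ) (Ω : Fin N → ℝ) (t : ℝ) :
    EuclideanSpace ℝ (Fin (K + Q)) :=
  WithLp.toLp 2 (fun i : Fin (K + Q) => (Fin.addCases (fun k => fObj (α k) (h k) Ω - t) (fun q => gObj (c q) Ω - σ q) i : ℝ))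

/-- `F(t) = inf_Ω max( max_k (f_k(Ω) − t), max_q (g_q(Ω) − σ_q) )`. -/
noncomputable def Ffun {N K Q : ℕ} (h : Fin K → Fin N → ℂ) (α : Fin K → ℝ)
    (c : Fin Q → Fin N → ℂ) (σ : Fin Q → ℝ) (t : ℝ) : ℝ :=
  ⨅ Ω : Fin N → ℝ, max (⨆ k, (fObj (α k) (h k) Ω - t)) (⨆ q, (gObj (c q) Ω - σ q))

/-- `F_λ(t) = inf_Ω C_λ(h(Ω,t))`. -/
noncomputable def Flam {N K Q : ℕ} (h : Fin K → Fin N → ℂ) (α : Fin K → ℝ)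
    (c : Fin Q → Fin N → ℂ) (σ : Fin Q → ℝ) (lam t : ℝ) : ℝ :=
  ⨅ Ω : Fin N → ℝ, Cupper lam (hVec h α c σ Ω t)


private lemma simplex_nonempty {m : ℕ} (hm : 0 < m) :
    (unitSimplex m).Nonempty := by
  refine ⟨EuclideanSpace.single ⟨0, hm⟩ (1:ℝ), ?_, ?_⟩
  · intro j; rw [EuclideanSpace.single_apply]; positivity
  · simp [EuclideanSpace.single_apply]

private lemma single_mem_simplex {m : ℕ} (i : Fin m) :
    EuclideanSpace.single i (1:ℝ) ∈ unitSimplex m := by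
  constructor
  · intro j; rw [EuclideanSpace.single_apply]; positivity
  · simp [EuclideanSpace.single_apply]

/-- Lower bound: each coordinate is ≤ Cupper. -/
private lemma coord_le_Cupper {m : ℕ} (lam : ℝ) (hlam : 0 < lam)
    (y : EuclideanSpace ℝ (Fin m)) (i : Fin m) : y i ≤ Cupper lam y := by
  set e : EuclideanSpace ℝ (Fin m) := EuclideanSpace.single i (1:ℝ) with he
  have hmem := single_mem_simplex i
  have hd : Metric.infDist ((2 * lam) • y) (unitSimplex m) ≤ ‖(2 * lam) • y - e‖ := by
    simpa [dist_eq_norm] using Metric.infDist_le_dist_of_mem hmem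
  have hd0 : 0 ≤ Metric.infDist ((2 * lam) • y) (unitSimplex m) := Metric.infDist_nonneg
  have hsq : (Metric.infDist ((2 * lam) • y) (unitSimplex m)) ^ 2 ≤ ‖(2 * lam) • y - e‖ ^ 2 :=
    pow_le_pow_left₀ hd0 hd 2
  have hinner : (inner ℝ ((2 * lam) • y) e : ℝ) = 2 * lam * y i := by
    rw [real_inner_smul_left, real_inner_comm, he, EuclideanSpace.inner_single_left]
    simp
  have hnorm : ‖(2 * lam) • y - e‖ ^ 2 = (2 * lam) ^ 2 * ‖y‖ ^ 2 - 2 * (2 * lam * y i) + 1 := by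
    rw [norm_sub_sq_real, hinner, norm_smul, he, EuclideanSpace.norm_single]
    have : |2 * lam| = 2 * lam := abs_of_pos (by positivity)
    rw [Real.norm_eq_abs, this, norm_one]
    ring
  have hsq2 : (Metric.infDist ((2 * lam) • y) (unitSimplex m)) ^ 2
      ≤ (2 * lam) ^ 2 * ‖y‖ ^ 2 - 4 * lam * y i + 1 := by
    rw [hnorm] at hsq; linarith
  unfold Cupper
  have h4 : 0 < 4 * lam := by positivity
  have hdiv : (Metric.infDist ((2 * lam) • y) (unitSimplex m)) ^ 2 / (4 * lam)
      ≤ ((2 * lam) ^ 2 * ‖y‖ ^ 2 - 4 * lam * y i + 1) / (4 * lam) :=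
    div_le_div_of_nonneg_right hsq2 h4.le
  have key : ((2 * lam) ^ 2 * ‖y‖ ^ 2 - 4 * lam * y i + 1) / (4 * lam)
      = lam * ‖y‖ ^ 2 - y i + 1 / (4 * lam) := by
    field_simp; ring
  rw [key] at hdiv
  linarith

/-- Upper bound: Cupper ≤ M + 1/(4λ) when all coordinates ≤ M. -/
private lemma Cupper_le {m : ℕ} (hm : 0 < m) (lam : ℝ) (hlam : 0 < lam)
    (y : EuclideanSpace ℝ (Fin m)) (M : ℝ) (hy : ∀ i, y i ≤ M) :
    Cupper lam y ≤ M + 1 / (4 * lam) := by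
  set D := Metric.infDist ((2 * lam) • y) (unitSimplex m) with hD
  have hdistsq : ∀ x ∈ unitSimplex m,
      (2 * lam) ^ 2 * ‖y‖ ^ 2 - 4 * lam * M ≤ (dist ((2 * lam) • y) x) ^ 2 := by
    intro x hx
    obtain ⟨hx0, hx1⟩ := hx
    have hinner : (inner ℝ ((2 * lam) • y) x : ℝ) = 2 * lam * ∑ j, y j * x j := by
      rw [real_inner_smul_left, PiLp.inner_apply]
      simp [RCLike.inner_apply, mul_comm]
    have hsum : ∑ j, y j * x j ≤ M := by
      calc ∑ j, y j * x j ≤ ∑ j, M * x j := by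
            apply Finset.sum_le_sum
            intro j _
            exact mul_le_mul_of_nonneg_right (hy j) (hx0 j)
        _ = M := by rw [← Finset.mul_sum, hx1, mul_one]
    have hxnorm : 0 ≤ ‖x‖ ^ 2 := by positivity
    rw [dist_eq_norm, norm_sub_sq_real, hinner, norm_smul, Real.norm_eq_abs,
      abs_of_pos (by positivity : (0:ℝ) < 2 * lam)]
    nlinarith [mul_le_mul_of_nonneg_left hsum (by positivity : (0:ℝ) ≤ 2 * lam)]
  have hDsq : (2 * lam) ^ 2 * ‖y‖ ^ 2 - 4 * lam * M ≤ D ^ 2 := by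
    set cc := (2 * lam) ^ 2 * ‖y‖ ^ 2 - 4 * lam * M with hcc
    rcases le_or_gt cc 0 with hc | hc
    · have : 0 ≤ D ^ 2 := by positivity
      linarith
    · have hb : Real.sqrt cc ≤ D := by
        rw [hD]
        by_contra hcon
        push_neg at hcon
        obtain ⟨x, hx, hdx⟩ := (Metric.infDist_lt_iff (simplex_nonempty hm)).1 hcon
        have h1 := hdistsq x hx
        have h2 : Real.sqrt cc ≤ Real.sqrt ((dist ((2 * lam) • y) x) ^ 2) :=
          Real.sqrt_le_sqrt h1
        rw [Real.sqrt_sq dist_nonneg] at h2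
        linarith
      have : cc ≤ D ^ 2 := by
        have h2 := pow_le_pow_left₀ (Real.sqrt_nonneg cc) hb 2
        rwa [Real.sq_sqrt hc.le] at h2
      exact this
  unfold Cupper
  have h4 : 0 < 4 * lam := by positivity
  have hdiv : ((2 * lam) ^ 2 * ‖y‖ ^ 2 - 4 * lam * M) / (4 * lam) ≤ D ^ 2 / (4 * lam) :=
    div_le_div_of_nonneg_right hDsq h4.le
  have key : ((2 * lam) ^ 2 * ‖y‖ ^ 2 - 4 * lam * M) / (4 * lam)
      = lam * ‖y‖ ^ 2 - M := by field_simp; ring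
  rw [key] at hdiv
  linarith
/-- Smoothed value function error bound: `−1/(4λ) ≤ F(t) − F_λ(t) ≤ 0`. -/
theorem stmt9 {N K Q : ℕ} (hN : 0 < N) (hK : 0 < K) (hQ : 0 < Q)
    (h : Fin K → Fin N → ℂ) (α : Fin K → ℝ) (hα : ∀ k, 0 < α k)
    (c : Fin Q → Fin N → ℂ) (σ : Fin Q → ℝ) (lam : ℝ) (hlam : 0 < lam) (t : ℝ) :
    -(1 / (4 * lam)) ≤ Ffun h α c σ t - Flam h α c σ lam t ∧
      Ffun h α c σ t - Flam h α c σ lam t ≤ 0 := by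
  haveI : Nonempty (Fin K) := ⟨⟨0, hK⟩⟩
  haveI : Nonempty (Fin Q) := ⟨⟨0, hQ⟩⟩
  set M : (Fin N → ℝ) → ℝ := fun Ω =>
    max (⨆ k, (fObj (α k) (h k) Ω - t)) (⨆ q, (gObj (c q) Ω - σ q)) with hM
  have hcoordM : ∀ Ω (i : Fin (K + Q)), hVec h α c σ Ω t i ≤ M Ω := by
    intro Ω i
    refine Fin.addCases (fun k => ?_) (fun q => ?_) i
    · have h1 : hVec h α c σ Ω t (Fin.castAdd Q k) = fObj (α k) (h k) Ω - t := by
        simp [hVec]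
      rw [h1]
      refine le_trans (le_ciSup (f := fun k => fObj (α k) (h k) Ω - t)
        (Set.Finite.bddAbove (Set.finite_range _)) k) ?_
      exact le_max_left _ _
    · have h1 : hVec h α c σ Ω t (Fin.natAdd K q) = gObj (c q) Ω - σ q := by
        simp [hVec]
      rw [h1]
      refine le_trans (le_ciSup (f := fun q => gObj (c q) Ω - σ q)
        (Set.Finite.bddAbove (Set.finite_range _)) q) ?_
      exact le_max_right _ _
  have hlow : ∀ Ω, M Ω ≤ Cupper lam (hVec h α c σ Ω t) := by
    intro Ω
    refine max_le (ciSup_le fun k => ?_) (ciSup_le fun q => ?_)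
    · have h1 : hVec h α c σ Ω t (Fin.castAdd Q k) = fObj (α k) (h k) Ω - t := by
        simp [hVec]
      rw [← h1]
      exact coord_le_Cupper lam hlam _ _
    · have h1 : hVec h α c σ Ω t (Fin.natAdd K q) = gObj (c q) Ω - σ q := by
        simp [hVec]
      rw [← h1]
      exact coord_le_Cupper lam hlam _ _
  have hup : ∀ Ω, Cupper lam (hVec h α c σ Ω t) ≤ M Ω + 1 / (4 * lam) := by
    intro Ω
    exact Cupper_le (Nat.add_pos_left hK Q) lam hlam _ (M Ω) (hcoordM Ω)
  set q0 : Fin Q := ⟨0, hQ⟩ with hq0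
  have hMb : ∀ Ω, -(σ q0) ≤ M Ω := by
    intro Ω
    have hg : 0 ≤ gObj (c q0) Ω := by unfold gObj; positivity
    have h1 : -(σ q0) ≤ gObj (c q0) Ω - σ q0 := by linarith
    refine h1.trans (le_trans (le_ciSup (f := fun q => gObj (c q) Ω - σ q)
      (Set.Finite.bddAbove (Set.finite_range _)) q0) ?_)
    exact le_max_right _ _
  have bddM : BddBelow (Set.range M) := by
    refine ⟨-(σ q0), ?_⟩
    rintro x ⟨Ω, rfl⟩
    exact hMb Ω
  have bddC : BddBelow (Set.range fun Ω => Cupper lam (hVec h α c σ Ω t)) := by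
    refine ⟨-(σ q0), ?_⟩
    rintro x ⟨Ω, rfl⟩
    exact (hMb Ω).trans (hlow Ω)
  have h1 : Ffun h α c σ t ≤ Flam h α c σ lam t := by
    unfold Ffun Flam
    exact ciInf_mono bddM hlow
  have h2 : Flam h α c σ lam t - 1 / (4 * lam) ≤ Ffun h α c σ t := by
    unfold Ffun
    refine le_ciInf fun Ω => ?_
    have h3 : Flam h α c σ lam t ≤ Cupper lam (hVec h α c σ Ω t) := ciInf_le bddC Ω
    have h4 := hup Ω
    have h5 : M Ω = max (⨆ k, (fObj (α k) (h k) Ω - t)) (⨆ q, (gObj (c q) Ω - σ q)) := rfl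
    linarith [h5 ▸ (by linarith : Flam h α c σ lam t - 1 / (4 * lam) ≤ M Ω)]
  constructor <;> linarith
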